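/- Fix n ≥ 1 and let N = n(n+1)/2. Let A be an integral domain, and let B_n(A) denote the group of invertible upper triangular n × n matrices over A (equivalently, upper triangular matrices all of whose diagonal entries are units of A; the inverse is again upper triangular). Then there exist subgroups G₀ ≤ G₁ ≤ … ≤ G_N = B_n(A) and, for each 0 ≤ i ≤ N−1, a subgroup H_i ≤ G_{i+1}, such that: G₀ = {1}; each G_i is normal in B_n(A); G_i ∩ H_i = {1} and G_i H_i = G_{i+1} for each i; each H_i is isomorphic as a group either to the additive group (A, +) or to the multiplicative group A^× of units of A; and moreover, for each i, if a ∈ G_i and b ∈ H_i and the matrix ab fixes the standard basis column vector e_n (i.e. (ab)·e_n = e_n), then a·e_n = e_n and b·e_n = e_n. -/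

import Mathlib

universe u

open Pointwise

namespace Stmt3

/-- The group `B_n(A)` of invertible upper triangular `n × n` matrices over `A` whose
inverse is again upper triangular, as a subgroup of the units of the matrix ring.
(Over a commutative ring the inverse of an invertible upper triangular matrix is
automatically upper triangular, and such matrices are exactly the upper triangular
ones with unit diagonal entries.) -/
def upperTriangularUnits (n : ℕ) (A : Type u) [CommRing A] :
    Subgroup (Matrix (Fin n) (Fin n) A)ˣ where
  carrier := {g | Matrix.BlockTriangular (g : Matrix (Fin n) (Fin n) A) id ∧
      Matrix.BlockTriangular (↑(g⁻¹) : Matrix (Fin n) (Fin n) A) id}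
  one_mem' := by
    refine ⟨?_, ?_⟩
    · rw [Units.val_one]; exact Matrix.blockTriangular_one
    · rw [inv_one, Units.val_one]; exact Matrix.blockTriangular_one
  mul_mem' := by
    rintro a b ⟨ha1, ha2⟩ ⟨hb1, hb2⟩
    refine ⟨?_, ?_⟩
    · rw [Units.val_mul]; exact ha1.mul hb1
    · rw [mul_inv_rev, Units.val_mul]; exact hb2.mul ha2
  inv_mem' := by
    rintro a ⟨ha1, ha2⟩
    refine ⟨ha2, ?_⟩
    rw [inv_inv]; exact ha1



def tri : ℕ → ℕ
  | 0 => 0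
  | (m+1) => tri m + (m+1)

lemma two_tri (m : ℕ) : 2 * tri m = m * (m+1) := by
  induction m with
  | zero => rfl
  | succ k ih =>
    have h : (k+1) * (k+1+1) = k * (k+1) + 2*(k+1) := by ring
    simp only [tri]
    omega

lemma tri_eq (m : ℕ) : tri m = m * (m+1) / 2 := by
  have := two_tri m; omega

lemma tri_mono : Monotone tri := monotone_nat_of_le_succ (fun k => by simp [tri])

lemma le_tri (m : ℕ) : m ≤ tri m := by
  induction m with
  | zero => simp
  | succ k ih => simp only [tri]; omega

lemma tri_succ (m : ℕ) : tri (m+1) = tri m + (m+1) := rfl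

/-- rank of upper-triangular position `(i,j)` (`i ≤ j`), for an `n × n` matrix. -/
def rnk (n i j : ℕ) : ℕ := if i = j then tri (n-1) + i else tri (n-1) - tri j + i

lemma rnk_diag (n i : ℕ) : rnk n i i = tri (n-1) + i := if_pos rfl

lemma rnk_strict (n i j : ℕ) (h : i ≠ j) : rnk n i j = tri (n-1) - tri j + i := if_neg h

lemma rnk_strict_lt (n i j : ℕ) (hij : i < j) (hj : j < n) : rnk n i j < tri (n-1) := by
  rw [rnk_strict n i j hij.ne]
  have h1 : j ≤ tri j := le_tri j
  have h2 : tri j ≤ tri (n-1) := tri_mono (by omega)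
  omega

lemma rnk_anti (n i j i' j' : ℕ) (h1 : i' ≤ i) (h2 : j ≤ j') (h3 : i < j) (h4 : i' < j') :
    rnk n i' j' ≤ rnk n i j := by
  rw [rnk_strict n i j h3.ne, rnk_strict n i' j' h4.ne]
  have := tri_mono h2
  omega

lemma rnk_row_lt (n i i' j : ℕ) (h1 : i < i') (h2 : i' < j) : rnk n i j < rnk n i' j := by
  rw [rnk_strict n i j (by omega), rnk_strict n i' j h2.ne]
  omega

lemma rnk_strict_lt_diag (n i j k : ℕ) (hij : i < j) (hj : j < n) : rnk n i j < rnk n k k := by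
  have := rnk_strict_lt n i j hij hj
  rw [rnk_diag]; omega

/-- ranks strictly decrease as the column index grows (strict positions). -/
lemma rnk_col_lt (n i j i' j' : ℕ) (h3 : i < j) (h4 : i' < j') (hjj : j < j') (hj' : j' < n) :
    rnk n i' j' < rnk n i j := by
  rw [rnk_strict n i j h3.ne, rnk_strict n i' j' h4.ne]
  have e1 : tri j' = tri (j'-1) + j' := by
    have : j' - 1 + 1 = j' := by omega
    rw [← this, tri_succ, this]
  have e2 : tri j ≤ tri (j'-1) := tri_mono (by omega)
  have e3 : tri j' ≤ tri (n-1) := tri_mono (by omega)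
  omega

lemma rnk_inj (n i j i' j' : ℕ) (h1 : i ≤ j) (h2 : i' ≤ j') (hj : j < n) (hj' : j' < n)
    (h : rnk n i j = rnk n i' j') : i = i' ∧ j = j' := by
  rcases eq_or_lt_of_le h1 with rfl | h1
  · rcases eq_or_lt_of_le h2 with rfl | h2
    · rw [rnk_diag, rnk_diag] at h; omega
    · exact absurd h (by have := rnk_strict_lt_diag n i' j' i h2 hj'; omega)
  · rcases eq_or_lt_of_le h2 with rfl | h2
    · exact absurd h (by have := rnk_strict_lt_diag n i j i' h1 hj; omega)
    · rcases lt_trichotomy j j' with hjj | hjj | hjj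
      · exact absurd h (by have := rnk_col_lt n i j i' j' h1 h2 hjj hj'; omega)
      · rw [rnk_strict n i j h1.ne, rnk_strict n i' j' h2.ne, hjj] at h
        omega
      · exact absurd h (by have := rnk_col_lt n i' j' i j h2 h1 hjj hj; omega)

lemma tri_root (s m : ℕ) (h : s < tri m) : ∃ j, 1 ≤ j ∧ j ≤ m ∧ tri (j-1) ≤ s ∧ s < tri j := by
  induction m with
  | zero => simp [tri] at h
  | succ k ih =>
    by_cases hs : s < tri k
    · obtain ⟨j, hj⟩ := ih hs
      exact ⟨j, hj.1, by omega, hj.2.2⟩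
    · exact ⟨k+1, by omega, le_refl _, by simpa using not_lt.mp hs, h⟩

lemma rnk_surj (n t : ℕ) (hn : 1 ≤ n) (ht : t < tri n) :
    ∃ i j, i ≤ j ∧ j < n ∧ rnk n i j = t := by
  by_cases hd : tri (n-1) ≤ t
  · refine ⟨t - tri (n-1), t - tri (n-1), le_refl _, ?_, ?_⟩
    · have : tri n = tri (n-1) + n := by
        have h : n - 1 + 1 = n := by omega
        rw [← h, tri_succ, h]
      omega
    · rw [rnk_diag]; omega
  · push_neg at hd
    have hT : 1 ≤ tri (n-1) := by omega
    set s := tri (n-1) - 1 - t with hs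
    obtain ⟨j, hj1, hj2, hj3, hj4⟩ := tri_root s (n-1) (by omega)
    have e1 : tri j = tri (j-1) + j := by
      have : j - 1 + 1 = j := by omega
      rw [← this, tri_succ, this]
    have e3 : tri j ≤ tri (n-1) := tri_mono hj2
    refine ⟨t - (tri (n-1) - tri j), j, by omega, by omega, ?_⟩
    rw [rnk_strict n _ j (by omega)]
    omega

variable {n : ℕ} {A : Type u} [CommRing A]

lemma tri_mul_diag {M N : Matrix (Fin n) (Fin n) A} (hM : M.BlockTriangular id)
    (hN : N.BlockTriangular id) (i : Fin n) : (M * N) i i = M i i * N i i := by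
  rw [Matrix.mul_apply]
  apply Finset.sum_eq_single
  · intro k _ hk
    rcases lt_or_gt_of_ne hk with h | h
    · exact mul_eq_zero_of_left (hM h) _
    · exact mul_eq_zero_of_right _ (hN h)
  · intro h; exact absurd (Finset.mem_univ i) h

lemma diag_mul_inv {g : (Matrix (Fin n) (Fin n) A)ˣ} (hg : g ∈ upperTriangularUnits n A)
    (i : Fin n) : (g : Matrix (Fin n) (Fin n) A) i i * (↑(g⁻¹) : Matrix (Fin n) (Fin n) A) i i = 1 := by
  have h : ((g : Matrix (Fin n) (Fin n) A) * (↑(g⁻¹) : Matrix (Fin n) (Fin n) A)) i i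
      = (1 : Matrix (Fin n) (Fin n) A) i i := by rw [g.mul_inv]
  rw [tri_mul_diag hg.1 hg.2 i, Matrix.one_apply_eq] at h
  exact h

lemma inv_diag_mul {g : (Matrix (Fin n) (Fin n) A)ˣ} (hg : g ∈ upperTriangularUnits n A)
    (i : Fin n) : (↑(g⁻¹) : Matrix (Fin n) (Fin n) A) i i * (g : Matrix (Fin n) (Fin n) A) i i = 1 := by
  rw [mul_comm]; exact diag_mul_inv hg i

/-- subgroup of `B_n(A)` cut out by requiring entries at "non-free" positions to be
those of the identity matrix; `P i j` means position `(i,j)` is free. -/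
def gamma (n : ℕ) (A : Type u) [CommRing A] (P : Fin n → Fin n → Prop)
    (hP : ∀ i k j : Fin n, i < k → k < j → P i k → P k j → P i j) :
    Subgroup (Matrix (Fin n) (Fin n) A)ˣ where
  carrier := {g | g ∈ upperTriangularUnits n A ∧
    (∀ i : Fin n, ¬ P i i → (g : Matrix (Fin n) (Fin n) A) i i = 1) ∧
    (∀ i j : Fin n, i < j → ¬ P i j → (g : Matrix (Fin n) (Fin n) A) i j = 0)}
  one_mem' := by
    refine ⟨one_mem _, by simp, ?_⟩
    intro i j hij _
    simp [Matrix.one_apply_ne hij.ne]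
  mul_mem' := by
    rintro a b ⟨haB, haD, haS⟩ ⟨hbB, hbD, hbS⟩
    refine ⟨mul_mem haB hbB, ?_, ?_⟩
    · intro i hPi
      rw [Units.val_mul, tri_mul_diag haB.1 hbB.1 i, haD i hPi, hbD i hPi, one_mul]
    · intro i j hij hPij
      rw [Units.val_mul, Matrix.mul_apply]
      apply Finset.sum_eq_zero
      intro k _
      rcases lt_trichotomy k i with hki | rfl | hki
      · exact mul_eq_zero_of_left (haB.1 hki) _
      · exact mul_eq_zero_of_right _ (hbS k j hij hPij)
      · rcases lt_trichotomy k j with hkj | rfl | hkj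
        · by_cases hPik : P i k
          · have hPkj : ¬ P k j := fun h => hPij (hP i k j hki hkj hPik h)
            exact mul_eq_zero_of_right _ (hbS k j hkj hPkj)
          · exact mul_eq_zero_of_left (haS i k hki hPik) _
        · exact mul_eq_zero_of_left (haS i k hki hPij) _
        · exact mul_eq_zero_of_right _ (hbB.1 hkj)
  inv_mem' := by
    rintro a ⟨haB, haD, haS⟩
    have haiB : a⁻¹ ∈ upperTriangularUnits n A := (upperTriangularUnits n A).inv_mem haB
    refine ⟨haiB, ?_, ?_⟩
    · intro i hPi
      have h1 := diag_mul_inv haB i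
      rw [haD i hPi, one_mul] at h1
      exact h1
    · have key : ∀ d : ℕ, ∀ i j : Fin n, i < j → (j : ℕ) - (i : ℕ) ≤ d → ¬ P i j →
          (↑(a⁻¹) : Matrix (Fin n) (Fin n) A) i j = 0 := by
        intro d
        induction d with
        | zero => intro i j hij hd _; exact absurd hd (by have : (i:ℕ) < j := hij; omega)
        | succ d ih =>
          intro i j hij hd hPij
          have h0 : ((a : Matrix (Fin n) (Fin n) A) * (↑(a⁻¹) : Matrix (Fin n) (Fin n) A)) i j
              = 0 := by rw [a.mul_inv]; exact Matrix.one_apply_ne hij.ne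
          rw [Matrix.mul_apply] at h0
          rw [Finset.sum_eq_single i ?h1 ?h2] at h0
          case h2 => intro h; exact absurd (Finset.mem_univ i) h
          case h1 =>
            intro k _ hk
            rcases lt_trichotomy k i with hki | rfl | hki
            · exact mul_eq_zero_of_left (haB.1 hki) _
            · exact absurd rfl hk
            · rcases lt_trichotomy k j with hkj | rfl | hkj
              · by_cases hPik : P i k
                · have hPkj : ¬ P k j := fun h => hPij (hP i k j hki hkj hPik h)
                  have : (i:ℕ) < k := hki
                  exact mul_eq_zero_of_right _ (ih k j hkj (by omega) hPkj)
                · exact mul_eq_zero_of_left (haS i k hki hPik) _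
              · exact mul_eq_zero_of_left (haS i k hki hPij) _
              · exact mul_eq_zero_of_right _ (haiB.1 hkj)
          have h2 := inv_diag_mul haB i
          calc (↑(a⁻¹) : Matrix (Fin n) (Fin n) A) i j
              = ((↑(a⁻¹) : Matrix (Fin n) (Fin n) A) i i * (a : Matrix (Fin n) (Fin n) A) i i)
                * (↑(a⁻¹) : Matrix (Fin n) (Fin n) A) i j := by rw [h2, one_mul]
            _ = (↑(a⁻¹) : Matrix (Fin n) (Fin n) A) i i *
                ((a : Matrix (Fin n) (Fin n) A) i i * (↑(a⁻¹) : Matrix (Fin n) (Fin n) A) i j) := by ring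
            _ = 0 := by rw [h0, mul_zero]
      intro i j hij hPij
      exact key (j : ℕ) i j hij (by omega) hPij

lemma gamma_le_B (P : Fin n → Fin n → Prop) (hP) :
    gamma n A P hP ≤ upperTriangularUnits n A := fun _ h => h.1

lemma gamma_mono {P Q : Fin n → Fin n → Prop} (hP) (hQ) (h : ∀ i j, P i j → Q i j) :
    gamma n A P hP ≤ gamma n A Q hQ := by
  rintro g ⟨hB, hD, hS⟩
  exact ⟨hB, fun i hi => hD i (fun hp => hi (h i i hp)),
    fun i j hij hq => hS i j hij (fun hp => hq (h i j hp))⟩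


variable {n : ℕ} {A : Type u} [CommRing A]

/-- The elementary unipotent unit `1 + c E_{i₀ j₀}`. -/
def elemUnit (i0 j0 : Fin n) (h : i0 ≠ j0) (c : A) : (Matrix (Fin n) (Fin n) A)ˣ where
  val := 1 + Matrix.single i0 j0 c
  inv := 1 + Matrix.single i0 j0 (-c)
  val_inv := by
    have hz : Matrix.single i0 j0 c * Matrix.single i0 j0 (-c) = 0 :=
      Matrix.single_mul_single_of_ne c i0 j0 i0 (Ne.symm h) (-c)
    have ha : Matrix.single i0 j0 c + Matrix.single i0 j0 (-c) = 0 := by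
      rw [← Matrix.single_add]; simp
    rw [add_mul, mul_add, mul_add, hz]
    simp only [one_mul, mul_one]
    rw [show (1 : Matrix (Fin n) (Fin n) A) + Matrix.single i0 j0 (-c) +
      (Matrix.single i0 j0 c + 0) =
      1 + (Matrix.single i0 j0 c + Matrix.single i0 j0 (-c)) by abel, ha, add_zero]
  inv_val := by
    have hz : Matrix.single i0 j0 (-c) * Matrix.single i0 j0 c = 0 :=
      Matrix.single_mul_single_of_ne (-c) i0 j0 i0 (Ne.symm h) c
    have ha : Matrix.single i0 j0 (-c) + Matrix.single i0 j0 c = 0 := by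
      rw [← Matrix.single_add]; simp
    rw [add_mul, mul_add, mul_add, hz]
    simp only [one_mul, mul_one]
    rw [show (1 : Matrix (Fin n) (Fin n) A) + Matrix.single i0 j0 c +
      (Matrix.single i0 j0 (-c) + 0) =
      1 + (Matrix.single i0 j0 (-c) + Matrix.single i0 j0 c) by abel, ha, add_zero]

lemma elemUnit_val (i0 j0 : Fin n) (h : i0 ≠ j0) (c : A) :
    (elemUnit i0 j0 h c : Matrix (Fin n) (Fin n) A) = 1 + Matrix.single i0 j0 c := rfl

lemma elemUnit_inv_val (i0 j0 : Fin n) (h : i0 ≠ j0) (c : A) :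
    (↑((elemUnit i0 j0 h c)⁻¹) : Matrix (Fin n) (Fin n) A) =
      1 + Matrix.single i0 j0 (-c) := rfl

lemma elemUnit_mul (i0 j0 : Fin n) (h : i0 ≠ j0) (c d : A) :
    elemUnit i0 j0 h c * elemUnit i0 j0 h d = elemUnit i0 j0 h (c + d) := by
  ext : 1
  rw [Units.val_mul, elemUnit_val, elemUnit_val, elemUnit_val, add_mul, mul_add, mul_add,
    Matrix.single_mul_single_of_ne c i0 j0 i0 (Ne.symm h) d, Matrix.single_add]
  simp only [one_mul, mul_one]
  abel

lemma elemUnit_mem_B (i0 j0 : Fin n) (h : i0 < j0) (c : A) :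
    elemUnit i0 j0 h.ne c ∈ upperTriangularUnits n A := by
  constructor
  · rw [elemUnit_val]
    exact Matrix.blockTriangular_one.add (Matrix.blockTriangular_single (le_of_lt h) c)
  · rw [elemUnit_inv_val]
    exact Matrix.blockTriangular_one.add (Matrix.blockTriangular_single (le_of_lt h) (-c))

/-- The diagonal unit with entry `u` at position `i₀` and `1` elsewhere. -/
def diagUnit (i0 : Fin n) (u : Aˣ) : (Matrix (Fin n) (Fin n) A)ˣ where
  val := Matrix.diagonal (fun k => if k = i0 then (u : A) else 1)
  inv := Matrix.diagonal (fun k => if k = i0 then ((u⁻¹ : Aˣ) : A) else 1)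
  val_inv := by
    rw [Matrix.diagonal_mul_diagonal]
    rw [show (fun i => (if i = i0 then (u : A) else 1) * (if i = i0 then ((u⁻¹ : Aˣ) : A) else 1))
      = fun _ => (1 : A) by funext k; split_ifs <;> simp, Matrix.diagonal_one]
  inv_val := by
    rw [Matrix.diagonal_mul_diagonal]
    rw [show (fun i => (if i = i0 then ((u⁻¹ : Aˣ) : A) else 1) * (if i = i0 then (u : A) else 1))
      = fun _ => (1 : A) by funext k; split_ifs <;> simp, Matrix.diagonal_one]

lemma diagUnit_val (i0 : Fin n) (u : Aˣ) :
    (diagUnit i0 u : Matrix (Fin n) (Fin n) A) =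
      Matrix.diagonal (fun k => if k = i0 then (u : A) else 1) := rfl

lemma diagUnit_inv_val (i0 : Fin n) (u : Aˣ) :
    (↑((diagUnit i0 u)⁻¹) : Matrix (Fin n) (Fin n) A) =
      Matrix.diagonal (fun k => if k = i0 then ((u⁻¹ : Aˣ) : A) else 1) := rfl

lemma diagUnit_mul (i0 : Fin n) (u v : Aˣ) :
    diagUnit i0 u * diagUnit i0 v = diagUnit i0 (u * v) := by
  ext : 1
  rw [Units.val_mul, diagUnit_val, diagUnit_val, diagUnit_val, Matrix.diagonal_mul_diagonal]
  apply congrArg Matrix.diagonal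
  funext k
  split_ifs <;> simp

lemma diagUnit_mem_B (i0 : Fin n) (u : Aˣ) : diagUnit i0 u ∈ upperTriangularUnits n A :=
  ⟨by rw [diagUnit_val]; exact Matrix.blockTriangular_diagonal _,
   by rw [diagUnit_inv_val]; exact Matrix.blockTriangular_diagonal _⟩

/-- The subgroup `G_t`. -/
def Gfilt (n : ℕ) (A : Type u) [CommRing A] (t : ℕ) : Subgroup (Matrix (Fin n) (Fin n) A)ˣ :=
  gamma n A (fun i j => rnk n (i : ℕ) (j : ℕ) < t) (by
    intro i k j h1 h2 e1 _
    have h1' : (i : ℕ) < (k : ℕ) := h1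
    have h2' : (k : ℕ) < (j : ℕ) := h2
    have := rnk_row_lt n i k j h1' h2'
    omega)

/-- The subgroup `H_t`. -/
def Hfilt (n : ℕ) (A : Type u) [CommRing A] (t : ℕ) : Subgroup (Matrix (Fin n) (Fin n) A)ˣ :=
  gamma n A (fun i j => rnk n (i : ℕ) (j : ℕ) = t) (by
    intro i k j h1 h2 e1 e2
    have h1' : (i : ℕ) < (k : ℕ) := h1
    have h2' : (k : ℕ) < (j : ℕ) := h2
    have := rnk_inj n i k k j (le_of_lt h1') (le_of_lt h2') k.isLt j.isLt (e1.trans e2.symm)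
    omega)

lemma mem_Gfilt {t : ℕ} {g : (Matrix (Fin n) (Fin n) A)ˣ} :
    g ∈ Gfilt n A t ↔ g ∈ upperTriangularUnits n A ∧
      (∀ i : Fin n, ¬ rnk n (i : ℕ) (i : ℕ) < t → (g : Matrix (Fin n) (Fin n) A) i i = 1) ∧
      (∀ i j : Fin n, i < j → ¬ rnk n (i : ℕ) (j : ℕ) < t →
        (g : Matrix (Fin n) (Fin n) A) i j = 0) := Iff.rfl

lemma mem_Hfilt {t : ℕ} {g : (Matrix (Fin n) (Fin n) A)ˣ} :
    g ∈ Hfilt n A t ↔ g ∈ upperTriangularUnits n A ∧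
      (∀ i : Fin n, ¬ rnk n (i : ℕ) (i : ℕ) = t → (g : Matrix (Fin n) (Fin n) A) i i = 1) ∧
      (∀ i j : Fin n, i < j → ¬ rnk n (i : ℕ) (j : ℕ) = t →
        (g : Matrix (Fin n) (Fin n) A) i j = 0) := Iff.rfl

lemma eq_one_of_all_constrained {g : (Matrix (Fin n) (Fin n) A)ˣ}
    (hB : g ∈ upperTriangularUnits n A)
    (hD : ∀ i : Fin n, (g : Matrix (Fin n) (Fin n) A) i i = 1)
    (hS : ∀ i j : Fin n, i < j → (g : Matrix (Fin n) (Fin n) A) i j = 0) : g = 1 := by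
  ext i j : 2
  rcases lt_trichotomy i j with h | rfl | h
  · rw [hS i j h, Units.val_one, Matrix.one_apply_ne h.ne]
  · rw [hD i, Units.val_one, Matrix.one_apply_eq]
  · rw [hB.1 (show (id j : Fin n) < id i from h), Units.val_one,
      Matrix.one_apply_ne (Ne.symm h.ne)]

lemma Gfilt_normal (t : ℕ) {g x : (Matrix (Fin n) (Fin n) A)ˣ}
    (hg : g ∈ upperTriangularUnits n A) (hx : x ∈ Gfilt n A t) :
    g * x * g⁻¹ ∈ Gfilt n A t := by
  obtain ⟨hxB, hxD, hxS⟩ := mem_Gfilt.mp hx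
  have hgi := (upperTriangularUnits n A).inv_mem hg
  refine mem_Gfilt.mpr ⟨mul_mem (mul_mem hg hxB) hgi, ?_, ?_⟩
  · intro i hi
    rw [Units.val_mul, Units.val_mul, mul_assoc,
      tri_mul_diag hg.1 (hxB.1.mul hg.2) i, tri_mul_diag hxB.1 hg.2 i, hxD i hi, one_mul,
      diag_mul_inv hg i]
  · intro i j hij hrij
    have hij' : (i : ℕ) < (j : ℕ) := hij
    rw [Units.val_mul, Units.val_mul, mul_assoc, Matrix.mul_apply]
    have hstep : ∀ k : Fin n,
        (g : Matrix (Fin n) (Fin n) A) i k *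
          (((x : Matrix (Fin n) (Fin n) A)) * (↑(g⁻¹) : Matrix (Fin n) (Fin n) A)) k j
        = (g : Matrix (Fin n) (Fin n) A) i k * (↑(g⁻¹) : Matrix (Fin n) (Fin n) A) k j := by
      intro k
      rcases lt_or_ge k i with hk | hk
      · rw [hg.1 hk, zero_mul, zero_mul]
      · have hk' : (i : ℕ) ≤ (k : ℕ) := hk
        congr 1
        rw [Matrix.mul_apply]
        refine (Finset.sum_eq_single k ?_ ?_).trans ?_
        · intro l _ hl
          rcases lt_trichotomy l k with h1 | rfl | h1
          · rw [hxB.1 h1, zero_mul]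
          · exact absurd rfl hl
          · rcases le_or_gt l j with h2 | h2
            · have hkl : (k : ℕ) < (l : ℕ) := h1
              have h2' : (l : ℕ) ≤ (j : ℕ) := h2
              have h3 := rnk_anti n (k : ℕ) (l : ℕ) (i : ℕ) (j : ℕ) hk' h2' hkl hij'
              rw [hxS k l h1 (by omega), zero_mul]
            · rw [hg.2 h2, mul_zero]
        · intro hmem; exact absurd (Finset.mem_univ k) hmem
        · have h4 := rnk_strict_lt_diag n (i : ℕ) (j : ℕ) (k : ℕ) hij' j.isLt
          rw [hxD k (by omega), one_mul]
    rw [Finset.sum_congr rfl (fun k _ => hstep k), ← Matrix.mul_apply, g.mul_inv,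
      Matrix.one_apply_ne hij.ne]

lemma elemUnit_apply_of_ne (i0 j0 : Fin n) (h : i0 ≠ j0) (c : A) (k l : Fin n)
    (h2 : ¬(i0 = k ∧ j0 = l)) :
    (elemUnit i0 j0 h c : Matrix (Fin n) (Fin n) A) k l = (1 : Matrix (Fin n) (Fin n) A) k l := by
  rw [elemUnit_val, Matrix.add_apply, Matrix.single_apply_of_ne _ _ _ _ _ h2, add_zero]

lemma elemUnit_apply_same (i0 j0 : Fin n) (h : i0 ≠ j0) (c : A) :
    (elemUnit i0 j0 h c : Matrix (Fin n) (Fin n) A) i0 j0 = c := by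
  rw [elemUnit_val, Matrix.add_apply, Matrix.one_apply_ne h, Matrix.single_apply_same,
    zero_add]

lemma elemUnit_mem_Hfilt (t : ℕ) (I J : Fin n) (hIJ : I < J) (hr : rnk n (I : ℕ) (J : ℕ) = t)
    (c : A) : elemUnit I J hIJ.ne c ∈ Hfilt n A t := by
  refine mem_Hfilt.mpr ⟨elemUnit_mem_B I J hIJ c, ?_, ?_⟩
  · intro k _
    rw [elemUnit_apply_of_ne I J hIJ.ne c k k
      (by rintro ⟨rfl, rfl⟩; exact absurd rfl hIJ.ne), Matrix.one_apply_eq]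
  · intro k l hkl hne
    rw [elemUnit_apply_of_ne I J hIJ.ne c k l ?_, Matrix.one_apply_ne hkl.ne]
    rintro ⟨rfl, rfl⟩; exact hne hr

lemma diagUnit_mem_Hfilt (t : ℕ) (I : Fin n) (hr : rnk n (I : ℕ) (I : ℕ) = t) (u : Aˣ) :
    diagUnit I u ∈ Hfilt n A t := by
  refine mem_Hfilt.mpr ⟨diagUnit_mem_B I u, ?_, ?_⟩
  · intro k hk
    rw [diagUnit_val, Matrix.diagonal_apply_eq, if_neg]
    rintro rfl; exact hk hr
  · intro k l hkl _
    rw [diagUnit_val, Matrix.diagonal_apply_ne _ hkl.ne]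

lemma Gfilt_factor (hn : 1 ≤ n) {t : ℕ} (ht : t < tri n) {x : (Matrix (Fin n) (Fin n) A)ˣ}
    (hx : x ∈ Gfilt n A (t + 1)) :
    ∃ a ∈ Gfilt n A t, ∃ b ∈ Hfilt n A t, a * b = x := by
  obtain ⟨hxB, hxD, hxS⟩ := mem_Gfilt.mp hx
  obtain ⟨i0, j0, hij, hjn, hr⟩ := rnk_surj n t hn ht
  rcases eq_or_lt_of_le hij with rfl | hij
  · -- diagonal position
    set I : Fin n := ⟨i0, hjn⟩ with hI
    have hu1 := diag_mul_inv hxB I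
    have hu2 := inv_diag_mul hxB I
    set u : Aˣ := ⟨(x : Matrix (Fin n) (Fin n) A) I I,
      (↑(x⁻¹) : Matrix (Fin n) (Fin n) A) I I, hu1, hu2⟩ with hu
    refine ⟨x * (diagUnit I u)⁻¹, ?_, diagUnit I u,
      diagUnit_mem_Hfilt t I hr u, inv_mul_cancel_right x _⟩
    refine mem_Gfilt.mpr ⟨mul_mem hxB ((upperTriangularUnits n A).inv_mem (diagUnit_mem_B I u)),
      ?_, ?_⟩
    · intro k hk
      rw [Units.val_mul, diagUnit_inv_val, Matrix.mul_diagonal]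
      by_cases hkI : k = I
      · subst hkI; rw [if_pos rfl]; exact hu1
      · rw [if_neg hkI, mul_one]
        apply hxD
        have hkv : (k : ℕ) ≠ i0 := fun hv => hkI (Fin.ext hv)
        rw [rnk_diag] at hk ⊢
        rw [rnk_diag] at hr
        omega
    · intro k l hkl hrkl
      have hkl' : (k : ℕ) < (l : ℕ) := hkl
      have := rnk_strict_lt n (k : ℕ) (l : ℕ) hkl' l.isLt
      rw [rnk_diag] at hr
      exact absurd (show rnk n (k : ℕ) (l : ℕ) < t by omega) hrkl
  · -- strict position
    set I : Fin n := ⟨i0, by omega⟩ with hI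
    set J : Fin n := ⟨j0, hjn⟩ with hJ
    have hIJ : I < J := hij
    set c : A := (↑(x⁻¹) : Matrix (Fin n) (Fin n) A) I I * (x : Matrix (Fin n) (Fin n) A) I J
      with hc
    refine ⟨x * (elemUnit I J hIJ.ne c)⁻¹, ?_, elemUnit I J hIJ.ne c,
      elemUnit_mem_Hfilt t I J hIJ hr c, inv_mul_cancel_right x _⟩
    refine mem_Gfilt.mpr ⟨mul_mem hxB
      ((upperTriangularUnits n A).inv_mem (elemUnit_mem_B I J hIJ c)), ?_, ?_⟩
    · intro k hk
      rw [Units.val_mul, elemUnit_inv_val, mul_add, mul_one, Matrix.add_apply]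
      have hdk : ¬ rnk n (k : ℕ) (k : ℕ) < t + 1 := by
        have := rnk_strict_lt n i0 j0 hij hjn
        rw [rnk_diag] at hk ⊢
        omega
      by_cases hkJ : k = J
      · rw [hkJ, Matrix.mul_single_apply_same,
          hxB.1 (show (id I : Fin n) < id J from hIJ), zero_mul, add_zero]
        exact hxD J (by rwa [hkJ] at hdk)
      · rw [Matrix.mul_single_apply_of_ne _ _ _ _ _ hkJ, add_zero]
        exact hxD k hdk
    · intro k l hkl hrkl
      have hkl' : (k : ℕ) < (l : ℕ) := hkl
      rw [Units.val_mul, elemUnit_inv_val, mul_add, mul_one, Matrix.add_apply]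
      have hIv : (I : ℕ) = i0 := rfl
      have hJv : (J : ℕ) = j0 := rfl
      by_cases hlJ : l = J
      · rw [hlJ, Matrix.mul_single_apply_same]
        by_cases hkI : k = I
        · rw [hkI, mul_neg, hc, ← mul_assoc, diag_mul_inv hxB I, one_mul, add_neg_cancel]
        · have hrkJ : ¬ rnk n (k : ℕ) j0 < t := by rw [hlJ, hJv] at hrkl; exact hrkl
          have hkj0 : (k : ℕ) < j0 := by rw [hlJ, hJv] at hkl'; exact hkl'
          have hklJ : k < J := by rw [← hlJ]; exact hkl
          have hxkJ : (x : Matrix (Fin n) (Fin n) A) k J = 0 := by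
            apply hxS k J hklJ
            rw [hJv]
            intro hlt
            rcases (lt_or_eq_of_le (Nat.lt_succ_iff.mp hlt)) with h' | h'
            · exact hrkJ h'
            · have := rnk_inj n (k : ℕ) (j0 : ℕ) i0 j0 (le_of_lt hkj0) hij.le hjn hjn
                (h'.trans hr.symm)
              omega
          have hxkI : (x : Matrix (Fin n) (Fin n) A) k I = 0 := by
            rcases lt_trichotomy k I with h' | h' | h'
            · apply hxS k I h'
              rw [hIv]
              have h'' : (k : ℕ) < i0 := h'
              have := rnk_col_lt n (k : ℕ) i0 i0 j0 h'' hij hij hjn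
              omega
            · exact absurd h' hkI
            · exact hxB.1 (show (id I : Fin n) < id k from h')
          rw [hxkJ, hxkI, zero_mul, add_zero]
      · rw [Matrix.mul_single_apply_of_ne _ _ _ _ _ hlJ, add_zero]
        apply hxS k l hkl
        intro hlt
        rcases (lt_or_eq_of_le (Nat.lt_succ_iff.mp hlt)) with h' | h'
        · exact hrkl h'
        · have := rnk_inj n (k : ℕ) (l : ℕ) i0 j0 (le_of_lt hkl') hij.le l.isLt hjn
            (h'.trans hr.symm)
          exact hlJ (Fin.ext (by rw [hJv]; omega))
/-- The last standard basis (column) vector `e_n` of `A^n`. -/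
def lastStd (n : ℕ) (A : Type u) [CommRing A] : Fin n → A :=
  fun j => if (j : ℕ) = n - 1 then 1 else 0


lemma mulVec_lastStd (hn : 1 ≤ n) (M : Matrix (Fin n) (Fin n) A) (k : Fin n) :
    M.mulVec (lastStd n A) k = M k ⟨n - 1, by omega⟩ := by
  have h0 : M.mulVec (lastStd n A) k = ∑ j, M k j * lastStd n A j := by
    simp [Matrix.mulVec, dotProduct]
  rw [h0, Finset.sum_eq_single (⟨n - 1, by omega⟩ : Fin n)]
  · simp [lastStd]
  · intro j _ hj
    have : (j : ℕ) ≠ n - 1 := fun hv => hj (Fin.ext hv)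
    simp [lastStd, this]
  · intro hmem; exact absurd (Finset.mem_univ _) hmem

lemma Gfilt_mono {s t : ℕ} (h : s ≤ t) : Gfilt n A s ≤ Gfilt n A t := by
  intro g hg
  obtain ⟨hB, hD, hS⟩ := mem_Gfilt.mp hg
  exact mem_Gfilt.mpr ⟨hB, fun i hi => hD i (by omega),
    fun i j hij hr => hS i j hij (by omega)⟩

lemma Hfilt_le_Gfilt_succ {t : ℕ} : Hfilt n A t ≤ Gfilt n A (t + 1) := by
  intro g hg
  obtain ⟨hB, hD, hS⟩ := mem_Hfilt.mp hg
  exact mem_Gfilt.mpr ⟨hB, fun i hi => hD i (by omega),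
    fun i j hij hr => hS i j hij (by omega)⟩

lemma Hfilt_strict_eq {t : ℕ} (I J : Fin n) (hIJ : I < J) (hr : rnk n (I : ℕ) (J : ℕ) = t)
    {h : (Matrix (Fin n) (Fin n) A)ˣ} (hh : h ∈ Hfilt n A t) :
    h = elemUnit I J hIJ.ne ((h : Matrix (Fin n) (Fin n) A) I J) := by
  obtain ⟨hB, hD, hS⟩ := mem_Hfilt.mp hh
  refine Units.ext (Matrix.ext fun k l => ?_)
  by_cases hkl : I = k ∧ J = l
  · rw [← hkl.1, ← hkl.2, elemUnit_apply_same]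
  · rw [elemUnit_apply_of_ne _ _ _ _ k l hkl]
    rcases lt_trichotomy k l with h' | rfl | h'
    · rw [Matrix.one_apply_ne h'.ne]
      apply hS k l h'
      intro he
      have h2 := rnk_inj n (k : ℕ) (l : ℕ) (I : ℕ) (J : ℕ) (le_of_lt h') (le_of_lt hIJ)
        l.isLt J.isLt (he.trans hr.symm)
      exact hkl ⟨(Fin.ext h2.1).symm, (Fin.ext h2.2).symm⟩
    · rw [Matrix.one_apply_eq]
      apply hD k
      intro he
      have h2 := rnk_inj n (k : ℕ) (k : ℕ) (I : ℕ) (J : ℕ) (le_refl _) (le_of_lt hIJ)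
        k.isLt J.isLt (he.trans hr.symm)
      exact absurd (Fin.ext (by omega) : I = J) hIJ.ne
    · rw [hB.1 h', Matrix.one_apply_ne (Ne.symm h'.ne)]

lemma Hfilt_diag_eq {t : ℕ} (I : Fin n) (hr : rnk n (I : ℕ) (I : ℕ) = t)
    {h : (Matrix (Fin n) (Fin n) A)ˣ} (hh : h ∈ Hfilt n A t)
    (u : Aˣ) (hu : (u : A) = (h : Matrix (Fin n) (Fin n) A) I I) : h = diagUnit I u := by
  obtain ⟨hB, hD, hS⟩ := mem_Hfilt.mp hh
  refine Units.ext (Matrix.ext fun k l => ?_)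
  rw [diagUnit_val]
  rcases lt_trichotomy k l with h' | rfl | h'
  · rw [Matrix.diagonal_apply_ne _ h'.ne]
    apply hS k l h'
    intro he
    have h2 := rnk_inj n (k : ℕ) (l : ℕ) (I : ℕ) (I : ℕ) (le_of_lt h') (le_refl _)
      l.isLt I.isLt (he.trans hr.symm)
    exact absurd (Fin.ext (by omega) : k = l) h'.ne
  · rw [Matrix.diagonal_apply_eq]
    by_cases hkI : k = I
    · rw [hkI, if_pos rfl, hu]
    · rw [if_neg hkI]
      apply hD k
      intro he
      rw [rnk_diag] at he
      rw [rnk_diag] at hr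
      exact hkI (Fin.ext (by omega))
  · rw [hB.1 h', Matrix.diagonal_apply_ne _ (Ne.symm h'.ne)]

lemma diagUnit_apply_II (I : Fin n) (u : Aˣ) :
    (diagUnit I u : Matrix (Fin n) (Fin n) A) I I = u := by
  rw [diagUnit_val, Matrix.diagonal_apply_eq, if_pos rfl]

def elemHom (t : ℕ) (I J : Fin n) (hIJ : I < J) (hr : rnk n (I : ℕ) (J : ℕ) = t) :
    Multiplicative A →* (Hfilt n A t) :=
  MonoidHom.mk' (fun c => ⟨elemUnit I J hIJ.ne c.toAdd, elemUnit_mem_Hfilt t I J hIJ hr _⟩)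
    (fun c d => Subtype.ext (by
      show elemUnit I J hIJ.ne (c * d).toAdd = elemUnit I J hIJ.ne c.toAdd * elemUnit I J hIJ.ne d.toAdd
      rw [elemUnit_mul]
      rfl))

lemma elemHom_bij (t : ℕ) (I J : Fin n) (hIJ : I < J) (hr : rnk n (I : ℕ) (J : ℕ) = t) :
    Function.Bijective ⇑(elemHom (A := A) t I J hIJ hr) := by
  constructor
  · intro c d h
    have hval : elemUnit I J hIJ.ne c.toAdd = elemUnit I J hIJ.ne d.toAdd :=
      Subtype.ext_iff.mp h
    have h2 : (elemUnit I J hIJ.ne c.toAdd : Matrix (Fin n) (Fin n) A) I J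
        = (elemUnit I J hIJ.ne d.toAdd : Matrix (Fin n) (Fin n) A) I J := by
      rw [hval]
    rw [elemUnit_apply_same, elemUnit_apply_same] at h2
    exact h2
  · rintro ⟨h, hh⟩
    refine ⟨Multiplicative.ofAdd ((h : Matrix (Fin n) (Fin n) A) I J), Subtype.ext ?_⟩
    exact (Hfilt_strict_eq I J hIJ hr hh).symm

def diagHom (t : ℕ) (I : Fin n) (hr : rnk n (I : ℕ) (I : ℕ) = t) :
    Aˣ →* (Hfilt n A t) :=
  MonoidHom.mk' (fun u => ⟨diagUnit I u, diagUnit_mem_Hfilt t I hr u⟩)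
    (fun u v => Subtype.ext (diagUnit_mul I u v).symm)

lemma diagHom_bij (t : ℕ) (I : Fin n) (hr : rnk n (I : ℕ) (I : ℕ) = t) :
    Function.Bijective ⇑(diagHom (A := A) t I hr) := by
  constructor
  · intro u v h
    have hval : diagUnit (A := A) I u = diagUnit I v := Subtype.ext_iff.mp h
    have h2 : (diagUnit I u : Matrix (Fin n) (Fin n) A) I I
        = (diagUnit I v : Matrix (Fin n) (Fin n) A) I I := by
      rw [hval]
    rw [diagUnit_apply_II, diagUnit_apply_II] at h2
    exact Units.ext h2
  · rintro ⟨h, hh⟩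
    have hB := (mem_Hfilt.mp hh).1
    refine ⟨⟨(h : Matrix (Fin n) (Fin n) A) I I, (↑(h⁻¹) : Matrix (Fin n) (Fin n) A) I I,
      diag_mul_inv hB I, inv_diag_mul hB I⟩, Subtype.ext ?_⟩
    exact (Hfilt_diag_eq I hr hh _ rfl).symm

/-- Lemma 11.8 of Haskell–Hrushovski–Macpherson, instance at an
arbitrary integral domain `A`.  With `N = n(n+1)/2` there is a chain
`G₀ = {1} ≤ G₁ ≤ … ≤ G_N = B_n(A)` of subgroups normal in `B_n(A)`, and subgroups
`H_i ≤ G_{i+1}` with `G_i ∩ H_i = {1}` and `G_i H_i = G_{i+1}`, each `H_i`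
isomorphic as a group to `(A, +)` or to `Aˣ`, and such that if `a ∈ G_i`, `b ∈ H_i`
and `a * b` fixes `e_n` (by left multiplication on column vectors), then so do `a`
and `b`. -/
theorem triangular_group_filtration (n : ℕ) (hn : 1 ≤ n) (A : Type u) [CommRing A]
    [IsDomain A] :
    ∃ (G : Fin (n * (n + 1) / 2 + 1) → Subgroup (Matrix (Fin n) (Fin n) A)ˣ)
      (H : Fin (n * (n + 1) / 2) → Subgroup (Matrix (Fin n) (Fin n) A)ˣ),
      G 0 = ⊥ ∧
      G (Fin.last (n * (n + 1) / 2)) = upperTriangularUnits n A ∧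
      Monotone G ∧
      (∀ i, ∀ g ∈ upperTriangularUnits n A, ∀ x ∈ G i, g * x * g⁻¹ ∈ G i) ∧
      (∀ i : Fin (n * (n + 1) / 2), H i ≤ G i.succ) ∧
      (∀ i : Fin (n * (n + 1) / 2), G i.castSucc ⊓ H i = ⊥) ∧
      (∀ i : Fin (n * (n + 1) / 2),
        (G i.castSucc : Set (Matrix (Fin n) (Fin n) A)ˣ) *
            (H i : Set (Matrix (Fin n) (Fin n) A)ˣ)
          = (G i.succ : Set (Matrix (Fin n) (Fin n) A)ˣ)) ∧
      (∀ i : Fin (n * (n + 1) / 2),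
        Nonempty (↥(H i) ≃* Multiplicative A) ∨ Nonempty (↥(H i) ≃* Aˣ)) ∧
      (∀ i : Fin (n * (n + 1) / 2), ∀ a ∈ G i.castSucc, ∀ b ∈ H i,
        Matrix.mulVec ((a * b : (Matrix (Fin n) (Fin n) A)ˣ) : Matrix (Fin n) (Fin n) A)
            (lastStd n A) = lastStd n A →
          Matrix.mulVec ((a : (Matrix (Fin n) (Fin n) A)ˣ) : Matrix (Fin n) (Fin n) A)
              (lastStd n A) = lastStd n A ∧
          Matrix.mulVec ((b : (Matrix (Fin n) (Fin n) A)ˣ) : Matrix (Fin n) (Fin n) A)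
              (lastStd n A) = lastStd n A) := by
  have htri : n * (n + 1) / 2 = tri n := (tri_eq n).symm
  have htri' : tri n = tri (n - 1) + n := by
    have h := tri_succ (n - 1)
    rw [Nat.sub_add_cancel hn] at h
    exact h
  refine ⟨fun t => Gfilt n A (t : ℕ), fun t => Hfilt n A (t : ℕ),
    ?_, ?_, ?_, ?_, ?_, ?_, ?_, ?_, ?_⟩
  · -- G 0 = ⊥
    apply le_antisymm _ bot_le
    intro g hg
    obtain ⟨hB, hD, hS⟩ := mem_Gfilt.mp hg
    rw [Subgroup.mem_bot]
    have h0 : ((0 : Fin (n * (n + 1) / 2 + 1)) : ℕ) = 0 := rfl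
    refine eq_one_of_all_constrained hB (fun i => hD i ?_) (fun i j hij => hS i j hij ?_) <;>
      · rw [h0]; exact Nat.not_lt_zero _
  · -- G last = B
    apply le_antisymm (fun g hg => hg.1)
    intro g hg
    have hlast : ((Fin.last (n * (n + 1) / 2)) : ℕ) = tri n := by rw [Fin.val_last, htri]
    refine mem_Gfilt.mpr ⟨hg, fun i hi => absurd ?_ hi, fun i j hij hcon => absurd ?_ hcon⟩
    · rw [hlast, rnk_diag]
      have := i.isLt
      omega
    · rw [hlast]
      have hij' : (i : ℕ) < (j : ℕ) := hij
      have h1 := rnk_strict_lt n (i : ℕ) (j : ℕ) hij' j.isLt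
      have h2 := tri_mono (show n - 1 ≤ n by omega)
      omega
  · -- Monotone
    intro s t hst
    exact Gfilt_mono (show (s : ℕ) ≤ (t : ℕ) from hst)
  · -- normality
    intro i g hg x hx
    exact Gfilt_normal _ hg hx
  · -- H i ≤ G i.succ
    intro i
    show Hfilt n A (i : ℕ) ≤ Gfilt n A ((i.succ : Fin (n * (n + 1) / 2 + 1)) : ℕ)
    rw [Fin.val_succ]
    exact Hfilt_le_Gfilt_succ
  · -- G ⊓ H = ⊥
    intro i
    apply le_antisymm _ bot_le
    intro g hg
    rw [Subgroup.mem_inf] at hg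
    obtain ⟨hgG, hgH⟩ := hg
    obtain ⟨hB, hD, hS⟩ := mem_Gfilt.mp hgG
    obtain ⟨_, hD', hS'⟩ := mem_Hfilt.mp hgH
    have hc : ((i.castSucc : Fin (n * (n + 1) / 2 + 1)) : ℕ) = (i : ℕ) := Fin.coe_castSucc i
    rw [hc] at hD hS
    rw [Subgroup.mem_bot]
    refine eq_one_of_all_constrained hB (fun k => ?_) (fun k l hkl => ?_)
    · by_cases h' : rnk n (k : ℕ) (k : ℕ) < (i : ℕ)
      · exact hD' k (by omega)
      · exact hD k h'
    · by_cases h' : rnk n (k : ℕ) (l : ℕ) < (i : ℕ)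
      · exact hS' k l hkl (by omega)
      · exact hS k l hkl h'
  · -- product
    intro i
    have hc : ((i.castSucc : Fin (n * (n + 1) / 2 + 1)) : ℕ) = (i : ℕ) := Fin.coe_castSucc i
    have hs : ((i.succ : Fin (n * (n + 1) / 2 + 1)) : ℕ) = (i : ℕ) + 1 := Fin.val_succ i
    apply Set.Subset.antisymm
    · rintro x hx
      rw [Set.mem_mul] at hx
      obtain ⟨a, ha, b, hb, rfl⟩ := hx
      rw [SetLike.mem_coe] at ha hb ⊢
      have ha' : a ∈ Gfilt n A ((i.castSucc : Fin (n * (n + 1) / 2 + 1)) : ℕ) := ha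
      rw [hc] at ha'
      have hb' : b ∈ Hfilt n A (i : ℕ) := hb
      show a * b ∈ Gfilt n A ((i.succ : Fin (n * (n + 1) / 2 + 1)) : ℕ)
      rw [hs]
      exact mul_mem (Gfilt_mono (Nat.le_succ _) ha') (Hfilt_le_Gfilt_succ hb')
    · intro x hx
      rw [SetLike.mem_coe] at hx
      have hx' : x ∈ Gfilt n A ((i.succ : Fin (n * (n + 1) / 2 + 1)) : ℕ) := hx
      rw [hs] at hx'
      obtain ⟨a, ha, b, hb, rfl⟩ := Gfilt_factor hn (show (i : ℕ) < tri n by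
        have := i.isLt; omega) hx'
      rw [Set.mem_mul]
      refine ⟨a, ?_, b, SetLike.mem_coe.mpr hb, rfl⟩
      rw [SetLike.mem_coe]
      show a ∈ Gfilt n A ((i.castSucc : Fin (n * (n + 1) / 2 + 1)) : ℕ)
      rw [hc]
      exact ha
  · -- isomorphism types
    intro i
    obtain ⟨i0, j0, hij, hjn, hr⟩ := rnk_surj n (i : ℕ) hn (by have := i.isLt; omega)
    rcases eq_or_lt_of_le hij with heq | hlt
    · right
      rw [heq] at hr
      exact ⟨(MulEquiv.ofBijective _ (diagHom_bij (i : ℕ) (⟨j0, hjn⟩ : Fin n) hr)).symm⟩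
    · left
      exact ⟨(MulEquiv.ofBijective _ (elemHom_bij (i : ℕ) (⟨i0, by omega⟩ : Fin n)
        (⟨j0, hjn⟩ : Fin n) hlt hr)).symm⟩
  · -- the e_n condition
    intro i a ha b hb hab
    have hc : ((i.castSucc : Fin (n * (n + 1) / 2 + 1)) : ℕ) = (i : ℕ) := Fin.coe_castSucc i
    have ha' : a ∈ Gfilt n A ((i.castSucc : Fin (n * (n + 1) / 2 + 1)) : ℕ) := ha
    rw [hc] at ha'
    obtain ⟨haB, haD, haS⟩ := mem_Gfilt.mp ha'
    obtain ⟨hbB, hbD, hbS⟩ := mem_Hfilt.mp hb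
    set L : Fin n := ⟨n - 1, by omega⟩ with hL
    have hLv : (L : ℕ) = n - 1 := rfl
    have hbe : (b : Matrix (Fin n) (Fin n) A).mulVec (lastStd n A) = lastStd n A := by
      funext k
      rw [mulVec_lastStd hn]
      show (b : Matrix (Fin n) (Fin n) A) k L = lastStd n A k
      by_cases hk : (k : ℕ) = n - 1
      · have hkL : k = L := Fin.ext hk
        have hRHS : lastStd n A k = 1 := by simp [lastStd, hk]
        rw [hRHS, hkL]
        by_cases hfree : rnk n (n - 1) (n - 1) = (i : ℕ)
        · have h1 := congrFun hab L
          rw [mulVec_lastStd hn] at h1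
          have hR1 : lastStd n A L = 1 := by simp [lastStd, hLv]
          rw [hR1, Units.val_mul, Matrix.mul_apply] at h1
          rw [Finset.sum_eq_single L ?_ ?_] at h1
          · rw [haD L (by rw [hLv, hfree]; omega), one_mul] at h1
            exact h1
          · intro m _ hm
            have hm2 : (m : ℕ) ≠ n - 1 := fun hv => hm (Fin.ext hv)
            have hm' : (m : ℕ) < n - 1 := by have := m.isLt; omega
            exact mul_eq_zero_of_left (haB.1 (show (m : Fin n) < L from hm')) _
          · intro hmem; exact absurd (Finset.mem_univ L) hmem
        · exact hbD L (by rw [hLv]; exact hfree)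
      · have hRHS : lastStd n A k = 0 := by simp [lastStd, hk]
        rw [hRHS]
        have hkL : k < L := show (k : ℕ) < (L : ℕ) by have := k.isLt; omega
        by_cases hfree : rnk n (k : ℕ) (n - 1) = (i : ℕ)
        · have h1 := congrFun hab k
          rw [mulVec_lastStd hn, hRHS, Units.val_mul, Matrix.mul_apply] at h1
          rw [Finset.sum_eq_single k ?_ ?_] at h1
          · rw [haD k (by
              have hs := rnk_strict_lt n (k : ℕ) (n - 1) (by have := k.isLt; omega) (by omega)
              rw [rnk_diag]
              omega), one_mul] at h1
            exact h1
          · intro m _ hm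
            rcases lt_trichotomy m k with h' | h' | h'
            · exact mul_eq_zero_of_left (haB.1 (show m < k from h')) _
            · exact absurd h' hm
            · by_cases hmL : m = L
              · rw [hmL]
                exact mul_eq_zero_of_left (haS k L hkL (by rw [hLv, hfree]; omega)) _
              · have hm2 : (m : ℕ) ≠ n - 1 := fun hv => hmL (Fin.ext hv)
                have hm' : m < L := show (m : ℕ) < (L : ℕ) by have := m.isLt; omega
                apply mul_eq_zero_of_right
                refine hbS m L hm' ?_
                intro he
                rw [hLv] at he
                have h2 := rnk_inj n (m : ℕ) (n - 1) (k : ℕ) (n - 1)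
                  (by have := m.isLt; omega) (by have := k.isLt; omega) (by omega) (by omega)
                  (he.trans hfree.symm)
                exact hm (Fin.ext (by omega))
          · intro hmem; exact absurd (Finset.mem_univ k) hmem
        · exact hbS k L hkL (by rw [hLv]; exact hfree)
    refine ⟨?_, hbe⟩
    calc (a : Matrix (Fin n) (Fin n) A).mulVec (lastStd n A)
        = (a : Matrix (Fin n) (Fin n) A).mulVec
            ((b : Matrix (Fin n) (Fin n) A).mulVec (lastStd n A)) := by rw [hbe]
      _ = ((a : Matrix (Fin n) (Fin n) A) * (b : Matrix (Fin n) (Fin n) A)).mulVec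
            (lastStd n A) := Matrix.mulVec_mulVec _ _ _
      _ = lastStd n A := by rw [← Units.val_mul]; exact hab


end Stmt3
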